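/- Let a and b be positive real numbers. Then the function x ↦ 1/√((x² + a²)(x² + b²)) is integrable on ℝ, and its integral is invariant under the arithmetic–geometric mean step: ∫_ℝ dx/√((x² + a²)(x² + b²)) = ∫_ℝ dx/√((x² + a·b)(x² + ((a + b)/2)²)). -/

import Mathlib

open MeasureTheory Set

lemma sqrt_prod_pos (a b x : ℝ) (ha : 0 < a) (hb : 0 < b) :
    0 < Real.sqrt ((x ^ 2 + a) * (x ^ 2 + b)) :=
  Real.sqrt_pos.2 (by positivity)

lemma integrable_aux (a b : ℝ) (ha : 0 < a) (hb : 0 < b) :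
    Integrable (fun x : ℝ => 1 / Real.sqrt ((x ^ 2 + a ^ 2) * (x ^ 2 + b ^ 2))) := by
  set m := min a b with hm
  have hm0 : 0 < m := lt_min ha hb
  have hma : m ≤ a := min_le_left a b
  have hmb : m ≤ b := min_le_right a b
  have hmaj : Integrable (fun x : ℝ => (m ^ 2 + x ^ 2)⁻¹) := by
    have h1 : Integrable (fun x : ℝ => m⁻¹ ^ 2 * (1 + (x / m) ^ 2)⁻¹) :=
      (integrable_inv_one_add_sq.comp_div hm0.ne').const_mul _
    refine h1.congr (Filter.Eventually.of_forall fun x => ?_)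
    field_simp
  refine hmaj.mono' ?_ (Filter.Eventually.of_forall fun x => ?_)
  · apply Continuous.aestronglyMeasurable
    exact continuous_const.div
      (Real.continuous_sqrt.comp (by continuity))
      (fun x => (sqrt_prod_pos (a^2) (b^2) x (by positivity) (by positivity)).ne')
  · have hs := sqrt_prod_pos (a^2) (b^2) x (by positivity) (by positivity)
    have ha2 : m^2 ≤ a^2 := pow_le_pow_left₀ hm0.le hma 2
    have hb2 : m^2 ≤ b^2 := pow_le_pow_left₀ hm0.le hmb 2
    have hP : (x^2+m^2)^2 ≤ (x^2+a^2)*(x^2+b^2) := by nlinarith [sq_nonneg x]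
    have h2 : m ^ 2 + x ^ 2 ≤ Real.sqrt ((x ^ 2 + a ^ 2) * (x ^ 2 + b ^ 2)) := by
      have := Real.sqrt_le_sqrt hP
      rwa [Real.sqrt_sq (by positivity), show x^2+m^2 = m^2+x^2 by ring] at this
    rw [Real.norm_eq_abs, abs_of_pos (by positivity), one_div]
    exact inv_anti₀ (by positivity) h2

theorem agm_invariance_of_elliptic_integral
    (a b : ℝ) (ha : 0 < a) (hb : 0 < b) :
    Integrable (fun x : ℝ => 1 / Real.sqrt ((x ^ 2 + a ^ 2) * (x ^ 2 + b ^ 2))) ∧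
    (∫ x : ℝ, 1 / Real.sqrt ((x ^ 2 + a ^ 2) * (x ^ 2 + b ^ 2)))
      = ∫ x : ℝ, 1 / Real.sqrt ((x ^ 2 + a * b) * (x ^ 2 + ((a + b) / 2) ^ 2)) := by
  refine ⟨integrable_aux a b ha hb, ?_⟩
  set h : ℝ → ℝ := fun x => 1 / Real.sqrt ((x ^ 2 + a ^ 2) * (x ^ 2 + b ^ 2)) with hh
  set g : ℝ → ℝ := fun x => 1 / Real.sqrt ((x ^ 2 + a * b) * (x ^ 2 + ((a + b) / 2) ^ 2)) with hg
  set f : ℝ → ℝ := fun x => (x - a * b / x) / 2 with hf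
  set f' : ℝ → ℝ := fun x => (1 + a * b / x ^ 2) / 2 with hf'
  -- surjectivity of f : Ioi 0 → ℝ
  have himg : f '' Ioi 0 = univ := by
    apply eq_univ_of_forall
    intro t
    set s := Real.sqrt (t ^ 2 + a * b) with hs
    have hs2 : s ^ 2 = t ^ 2 + a * b := Real.sq_sqrt (by positivity)
    have hst : |t| < s := by
      rw [← Real.sqrt_sq_eq_abs]
      exact Real.sqrt_lt_sqrt (sq_nonneg t) (by nlinarith)
    have hx0 : 0 < t + s := by
      have := neg_abs_le t
      linarith
    refine ⟨t + s, hx0, ?_⟩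
    have hx2 : (t + s) ^ 2 = 2 * t * (t + s) + a * b := by nlinarith
    show ((t + s) - a * b / (t + s)) / 2 = t
    field_simp
    nlinarith
  -- injectivity
  have hinj : InjOn f (Ioi 0) := by
    have : StrictMonoOn f (Ioi 0) := by
      intro x hx y hy hxy
      simp only [hf]
      have h1 : a * b / y < a * b / x := div_lt_div_of_pos_left (by positivity) hx hxy
      simp only [mem_Ioi] at hx hy
      have := div_lt_div_of_pos_left (mul_pos ha hb) hx hxy
      linarith
    exact this.injOn
  -- derivative
  have hderiv : ∀ x ∈ Ioi (0:ℝ), HasDerivWithinAt f (f' x) (Ioi 0) x := by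
    intro x hx
    have hx0 : (0:ℝ) < x := hx
    have : HasDerivAt f ((1 - a * b * (-(x ^ 2)⁻¹)) / 2) x := by
      have h1 : HasDerivAt (fun x : ℝ => x - a * b / x) (1 - a * b * (-(x ^ 2)⁻¹)) x := by
        simpa [div_eq_mul_inv, mul_comm, Pi.sub_def] using
          (hasDerivAt_id' x).sub (((hasDerivAt_inv hx0.ne').const_mul (a * b)))
      exact h1.div_const 2
    have heq : (1 - a * b * (-(x ^ 2)⁻¹)) / 2 = f' x := by
      simp only [hf']
      ring
    exact (heq ▸ this).hasDerivWithinAt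
  have key := integral_image_eq_integral_abs_deriv_smul measurableSet_Ioi hderiv hinj g
  rw [himg, setIntegral_univ] at key
  -- pointwise identity on Ioi 0
  have hpt : ∀ x ∈ Ioi (0:ℝ), |f' x| • g (f x) = 2 * h x := by
    intro x hx
    have hx0 : (0:ℝ) < x := hx
    have hP := sqrt_prod_pos (a^2) (b^2) x (by positivity) (by positivity)
    have hkey : ((f x) ^ 2 + a * b) * ((f x) ^ 2 + ((a + b) / 2) ^ 2)
        = ((x ^ 2 + a * b) / (4 * x ^ 2)) ^ 2 * ((x ^ 2 + a ^ 2) * (x ^ 2 + b ^ 2)) := by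
      simp only [hf]
      field_simp
      ring
    have hsq : Real.sqrt (((f x) ^ 2 + a * b) * ((f x) ^ 2 + ((a + b) / 2) ^ 2))
        = (x ^ 2 + a * b) / (4 * x ^ 2) * Real.sqrt ((x ^ 2 + a ^ 2) * (x ^ 2 + b ^ 2)) := by
      rw [hkey, Real.sqrt_mul (sq_nonneg _), Real.sqrt_sq (by positivity)]
    have habs : |f' x| = f' x := abs_of_pos (by simp only [hf']; positivity)
    rw [habs, smul_eq_mul]
    simp only [hg, hh, hf']
    rw [hsq]
    field_simp
    ring
  rw [key]
  refine Eq.symm ?_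
  calc ∫ x in Ioi (0:ℝ), |f' x| • g (f x)
      = ∫ x in Ioi (0:ℝ), 2 * h x := setIntegral_congr_fun measurableSet_Ioi hpt
    _ = 2 * ∫ x in Ioi (0:ℝ), h x := by rw [integral_const_mul]
    _ = ∫ x, h x := by
        rw [← integral_comp_abs (f := h)]
        congr 1
        ext x
        simp only [hh, sq_abs]
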